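/- For every odd n ≥ 3, the odd cover number of the complete graph K_n equals (n+1)/2; that is, the minimum number of complete bipartite graphs on the vertex set of K_n such that every edge of K_n lies in an odd number of them is exactly (n+1)/2. -/
import Mathlib


open Finset

/-- `e` is an edge of the complete `r`-partite `r`-graph with parts `P 0, ..., P (r-1)`:
it meets every part in exactly one vertex. -/
def IsEdge {α : Type*} [DecidableEq α] {r : ℕ} (P : Fin r → Finset α) (e : Finset α) : Prop :=
  ∀ i, (e ∩ P i).card = 1

instance {α : Type*} [DecidableEq α] {r : ℕ} (P : Fin r → Finset α) (e : Finset α) :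
    Decidable (IsEdge P e) :=
  inferInstanceAs (Decidable (∀ _, _))

/-- The family `H` of complete `r`-partite `r`-graphs (each given by `r` pairwise disjoint
parts inside `V`) is an odd cover of the complete `r`-graph on `V`: every `r`-subset of `V`
is an edge of an odd number of members. -/
def IsOddCoverOn {α : Type*} [DecidableEq α] (V : Finset α) {r m : ℕ}
    (H : Fin m → Fin r → Finset α) : Prop :=
  (∀ i j, H i j ⊆ V) ∧
  (∀ i, Pairwise (Function.onFun Disjoint (H i))) ∧
  ∀ e ⊆ V, e.card = r → Odd ((Finset.univ.filter fun i => IsEdge (H i) e)).card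

/-- `oddCoverNumber r n` is the odd cover number `b_r(n)` of `K_n^(r)`. -/
noncomputable def oddCoverNumber (r n : ℕ) : ℕ :=
  sInf {m | ∃ H : Fin m → Fin r → Finset (Fin n), IsOddCoverOn Finset.univ H}

section Helpers

variable {β : Type*} [DecidableEq β]

lemma pair_inter_card_eq_one {u v : β} (huv : u ≠ v) (P : Finset β) :
    (({u, v} : Finset β) ∩ P).card = 1 ↔ ((u ∈ P ∧ v ∉ P) ∨ (u ∉ P ∧ v ∈ P)) := by
  have h1 : ({u, v} : Finset β) ∩ P = ({u, v} : Finset β).filter (· ∈ P) := by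
    ext x; simp [Finset.mem_filter, Finset.mem_inter, and_comm]
  by_cases hu : u ∈ P <;> by_cases hv : v ∈ P <;>
    simp [h1, Finset.filter_insert, Finset.filter_singleton, hu, hv, huv,
      Finset.card_insert_of_notMem, huv]

lemma isEdge_pair_iff {u v : β} (huv : u ≠ v) (P : Fin 2 → Finset β)
    (hd : Disjoint (P 0) (P 1)) :
    IsEdge P {u, v} ↔ ((u ∈ P 0 ∧ v ∈ P 1) ∨ (v ∈ P 0 ∧ u ∈ P 1)) := by
  have h0 : ∀ x, x ∈ P 0 → x ∉ P 1 := fun x hx => Finset.disjoint_left.mp hd hx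
  constructor
  · intro h
    have e0 := (pair_inter_card_eq_one huv (P 0)).mp (h 0)
    have e1 := (pair_inter_card_eq_one huv (P 1)).mp (h 1)
    tauto
  · intro h i
    have h1 : ∀ x, x ∈ P 1 → x ∉ P 0 := fun x hx hx0 => h0 x hx0 hx
    fin_cases i
    · exact (pair_inter_card_eq_one huv (P 0)).mpr (by tauto)
    · exact (pair_inter_card_eq_one huv (P 1)).mpr (by tauto)

lemma odd_iff_zmod (c : ℕ) : Odd c ↔ ((c : ZMod 2) = 1) := by
  rw [Nat.odd_iff]
  constructor
  · intro h; rw [← ZMod.natCast_mod, h]; simp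
  · intro h
    rcases Nat.mod_two_eq_zero_or_one c with h0 | h1
    · rw [← ZMod.natCast_mod, h0] at h
      exact absurd h (by decide)
    · exact h1

end Helpers

lemma lower_bound {n m : ℕ} (hn3 : 3 ≤ n) (ho : Odd n)
    (H : Fin m → Fin 2 → Finset (Fin n)) (hH : IsOddCoverOn Finset.univ H) :
    (n + 1) / 2 ≤ m := by
  classical
  obtain ⟨hsub, hdisj, hcov⟩ := hH
  by_contra hlt
  push_neg at hlt
  obtain ⟨k, hk⟩ := ho
  have h2m : 2 * m + 1 ≤ n := by omega
  set F := ZMod 2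
  let a : Fin m → Fin n → F := fun i v => if v ∈ H i 0 then 1 else 0
  let b : Fin m → Fin n → F := fun i v => if v ∈ H i 1 then 1 else 0
  have hdis01 : ∀ i, Disjoint (H i 0) (H i 1) := fun i => hdisj i (by decide : (0 : Fin 2) ≠ 1)
  have hdis : ∀ i (v : Fin n), a i v * b i v = 0 := by
    intro i v
    by_cases h0 : v ∈ H i 0
    · have h1 : v ∉ H i 1 := Finset.disjoint_left.mp (hdis01 i) h0
      simp [a, b, h0, h1]
    · simp [a, b, h0]
  -- coverage in ZMod 2
  have key : ∀ u v : Fin n, u ≠ v → ∑ i, (a i u * b i v + b i u * a i v) = 1 := by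
    intro u v huv
    have hc := hcov {u, v} (Finset.subset_univ _) (Finset.card_pair huv)
    have hcast := (odd_iff_zmod _).mp hc
    rw [Finset.card_filter] at hcast
    push_cast at hcast
    rw [← hcast]
    apply Finset.sum_congr rfl
    intro i _
    have h0 : ∀ x, x ∈ H i 0 → x ∉ H i 1 := fun x hx => Finset.disjoint_left.mp (hdis01 i) hx
    by_cases hE : IsEdge (H i) {u, v}
    · rw [if_pos hE]
      rcases (isEdge_pair_iff huv _ (hdis01 i)).mp hE with ⟨h1, h4⟩ | ⟨h2, h3⟩
      · have h3 : u ∉ H i 1 := h0 u h1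
        have h2 : v ∉ H i 0 := fun hv => h0 v hv h4
        simp [a, b, h1, h2, h3, h4]
      · have h1 : u ∉ H i 0 := fun hu => h0 u hu h3
        have h4 : v ∉ H i 1 := h0 v h2
        simp [a, b, h1, h2, h3, h4]
    · rw [if_neg hE]
      have hne := fun h => hE ((isEdge_pair_iff huv _ (hdis01 i)).mpr h)
      by_cases h1 : u ∈ H i 0 <;> by_cases h2 : v ∈ H i 0 <;>
        by_cases h3 : u ∈ H i 1 <;> by_cases h4 : v ∈ H i 1 <;>
        simp [a, b, h1, h2, h3, h4] <;> (exfalso; exact hne (by tauto))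
  have diagzero : ∀ u : Fin n, ∑ i, (a i u * b i u + b i u * a i u) = 0 := by
    intro u
    apply Finset.sum_eq_zero
    intro i _
    rw [mul_comm (b i u) (a i u), ← two_mul]
    rw [show ((2:F)) = 0 from rfl]
    ring
  -- expansion identity
  have expand : ∀ y : Fin n → F, (∑ v, y v) = 0 →
      y = ∑ i : Fin m, ((∑ v, b i v * y v) • a i + (∑ v, a i v * y v) • b i) := by
    intro y hy
    funext u
    rw [Finset.sum_apply]
    have hterm : ∀ i : Fin m, ((∑ v, b i v * y v) • a i + (∑ v, a i v * y v) • b i) u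
        = ∑ v, y v * (a i u * b i v + b i u * a i v) := by
      intro i
      simp only [Pi.add_apply, Pi.smul_apply, smul_eq_mul]
      rw [Finset.sum_mul, Finset.sum_mul, ← Finset.sum_add_distrib]
      apply Finset.sum_congr rfl
      intro v _
      ring
    rw [Finset.sum_congr rfl (fun i _ => hterm i), Finset.sum_comm]
    symm
    have hS : ∀ v : Fin n, ∑ i, (a i u * b i v + b i u * a i v)
        = 1 + (if v = u then 1 else 0) := by
      intro v
      by_cases hvu : v = u
      · subst hvu
        rw [diagzero v]
        simp only [if_pos rfl]
        decide
      · rw [key u v (fun h => hvu h.symm)]; simp [hvu]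
    calc ∑ v, ∑ i, y v * (a i u * b i v + b i u * a i v)
        = ∑ v, y v * (1 + if v = u then 1 else 0) := by
          apply Finset.sum_congr rfl; intro v _
          rw [← Finset.mul_sum, hS v]
      _ = (∑ v, y v) + ∑ v, (if v = u then y v else 0) := by
          rw [← Finset.sum_add_distrib]
          apply Finset.sum_congr rfl; intro v _
          by_cases hvu : v = u <;> simp [hvu] <;> ring
      _ = y u := by rw [hy, Finset.sum_ite_eq' Finset.univ u y]; simp
  -- linear algebra
  let c : Fin m ⊕ Fin m → (Fin n → F) := Sum.elim a b
  let S : Submodule F (Fin n → F) := Submodule.span F (Set.range c)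
  let ℓ : (Fin n → F) →ₗ[F] F := ∑ v : Fin n, LinearMap.proj v
  have hℓ : ∀ y : Fin n → F, ℓ y = ∑ v, y v := by
    intro y; simp [ℓ, LinearMap.sum_apply, LinearMap.proj_apply]
  let W : Submodule F (Fin n → F) := LinearMap.ker ℓ
  have hWS : W ≤ S := by
    intro y hy
    have hy0 : ∑ v, y v = 0 := by rw [← hℓ]; exact hy
    rw [expand y hy0]
    apply Submodule.sum_mem
    intro i _
    exact Submodule.add_mem _
      (Submodule.smul_mem _ _ (Submodule.subset_span ⟨Sum.inl i, rfl⟩))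
      (Submodule.smul_mem _ _ (Submodule.subset_span ⟨Sum.inr i, rfl⟩))
  have hfintotal : Module.finrank F (Fin n → F) = n := by
    rw [Module.finrank_pi]; simp
  have hv0 : (0 : ℕ) < n := by omega
  have hℓsurj : LinearMap.range ℓ = ⊤ := by
    rw [LinearMap.range_eq_top]
    intro x
    refine ⟨Pi.single ⟨0, hv0⟩ x, ?_⟩
    rw [hℓ, Finset.sum_pi_single']
    simp
  have hfinW : Module.finrank F W = n - 1 := by
    have h := LinearMap.finrank_range_add_finrank_ker ℓ
    rw [hℓsurj, finrank_top, Module.finrank_self, hfintotal] at h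
    have h' : Module.finrank F W = Module.finrank F (LinearMap.ker ℓ) := rfl
    rw [h']
    omega
  have hfinS_le : Module.finrank F S ≤ 2 * m := by
    have h1 : Module.finrank F S ≤ (Set.range c).toFinset.card := finrank_span_le_card _
    have h2 : (Set.range c).toFinset.card ≤ Fintype.card (Fin m ⊕ Fin m) := by
      rw [Set.toFinset_card]
      exact Fintype.card_range_le c
    simp only [Fintype.card_sum, Fintype.card_fin] at h2
    omega
  have hWfinrank_le : Module.finrank F W ≤ Module.finrank F S := Submodule.finrank_mono hWS
  have h2meq : 2 * m = n - 1 := by omega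
  have hSW : W = S := Submodule.eq_of_le_of_finrank_le hWS
    (le_trans hfinS_le (by rw [hfinW]; omega))
  -- linear independence
  have hli : LinearIndependent F c := by
    rw [linearIndependent_iff_card_eq_finrank_span]
    have : Set.finrank F (Set.range c) = Module.finrank F S := rfl
    rw [this, ← hSW, hfinW]
    simp only [Fintype.card_sum, Fintype.card_fin]
    omega
  have hm1 : 1 ≤ m := by omega
  let j0 : Fin m := ⟨0, hm1⟩
  have hbW : (b j0) ∈ W := by
    rw [hSW]
    exact Submodule.subset_span ⟨Sum.inr j0, rfl⟩
  have hb0 : ∑ v, b j0 v = 0 := by rw [← hℓ]; exact hbW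
  have hexp := expand (b j0) hb0
  -- build dependence
  let g : Fin m ⊕ Fin m → F := Sum.elim (fun i => ∑ v, b i v * b j0 v)
    (fun i => (∑ v, a i v * b j0 v) + (if i = j0 then 1 else 0))
  have hgsum : ∑ p, g p • c p = 0 := by
    funext u
    rw [Finset.sum_apply]
    have hX : ∀ p : Fin m ⊕ Fin m, (g p • c p) u = g p * c p u := fun p => rfl
    rw [Finset.sum_congr rfl (fun p _ => hX p), Fintype.sum_sum_type]
    have hbju : b j0 u = ∑ i : Fin m,
        ((∑ v, b i v * b j0 v) * a i u + (∑ v, a i v * b j0 v) * b i u) := by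
      have h := congrFun hexp u
      rw [Finset.sum_apply] at h
      simp only [Pi.add_apply, Pi.smul_apply, smul_eq_mul] at h
      exact h
    have hL : ∀ i : Fin m, g (Sum.inl i) * c (Sum.inl i) u
        = (∑ v, b i v * b j0 v) * a i u := fun i => rfl
    have hR : ∀ i : Fin m, g (Sum.inr i) * c (Sum.inr i) u
        = (∑ v, a i v * b j0 v) * b i u + (if i = j0 then 1 else 0) * b i u := by
      intro i
      show ((∑ v, a i v * b j0 v) + (if i = j0 then 1 else 0)) * b i u = _
      rw [add_mul]
    rw [Finset.sum_congr rfl (fun i _ => hL i), Finset.sum_congr rfl (fun i _ => hR i),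
      Finset.sum_add_distrib]
    have hIte : ∑ i : Fin m, (if i = j0 then (1:F) else 0) * b i u = b j0 u := by
      simp only [ite_mul, one_mul, zero_mul]
      rw [Finset.sum_ite_eq' Finset.univ j0 (fun i => b i u)]
      simp
    rw [hIte, ← add_assoc, ← Finset.sum_add_distrib, ← hbju]
    show b j0 u + b j0 u = (0 : Fin n → F) u
    rw [CharTwo.add_self_eq_zero]
    simp
  have hg0 := Fintype.linearIndependent_iff.mp hli g hgsum (Sum.inr j0)
  simp only [g, Sum.elim_inr, if_pos rfl] at hg0
  have hab0 : ∑ v, a j0 v * b j0 v = 0 := Finset.sum_eq_zero (fun v _ => hdis j0 v)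
  rw [hab0, zero_add] at hg0
  exact one_ne_zero hg0


section Upper

def pa (i v : ℕ) : Prop :=
  (v = 1 ∧ (i = 0 ∨ 3 ≤ i)) ∨ (v = 2 ∧ (i = 1 ∨ 3 ≤ i)) ∨ (v = 3 ∧ i = 2) ∨ (v = 4) ∨
  (5 ≤ v ∧ v % 2 = 1 ∧ (i = 0 ∨ (v + 1) / 2 < i)) ∨
  (6 ≤ v ∧ v % 2 = 0 ∧ (i = 1 ∨ (3 ≤ i ∧ i < v / 2)))

def pb (i v : ℕ) : Prop :=
  (v = 0 ∧ i ≤ 2) ∨ (v = 1 ∧ i = 1) ∨ (v = 2 ∧ i = 2) ∨ (v = 3 ∧ i = 0) ∨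
  (5 ≤ v ∧ v % 2 = 1 ∧ i = (v + 1) / 2) ∨
  (6 ≤ v ∧ v % 2 = 0 ∧ (i = 0 ∨ i = 2 ∨ i = v / 2))

instance (i v : ℕ) : Decidable (pa i v) := by unfold pa; infer_instance
instance (i v : ℕ) : Decidable (pb i v) := by unfold pb; infer_instance

lemma pa_pb_not (i v : ℕ) : ¬ (pa i v ∧ pb i v) := by
  simp only [pa, pb]; omega

lemma filter_helper (m : ℕ) (P : ℕ → Prop) [DecidablePred P] (S : Finset ℕ)
    (h : ∀ i, (i < m ∧ P i) ↔ i ∈ S) : (Finset.range m).filter P = S := by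
  ext i
  rw [Finset.mem_filter, Finset.mem_range]
  exact h i

lemma core (m u v : ℕ) (hm : 2 ≤ m) (hu : u < 2 * m - 1) (hv : v < 2 * m - 1) (huv : u < v) :
    Odd (((Finset.range m).filter (fun i => pa i u ∧ pb i v)).card +
      ((Finset.range m).filter (fun i => pa i v ∧ pb i u)).card) := by
  rcases (show u = 0 ∨ u = 1 ∨ u = 2 ∨ u = 3 ∨ u = 4 ∨ (5 ≤ u ∧ u % 2 = 1) ∨ (6 ≤ u ∧ u % 2 = 0) by omega) with hu0 | hu0 | hu0 | hu0 | hu0 | hu0 | hu0 <;>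
    rcases (show v = 0 ∨ v = 1 ∨ v = 2 ∨ v = 3 ∨ v = 4 ∨ (5 ≤ v ∧ v % 2 = 1) ∨ (6 ≤ v ∧ v % 2 = 0) by omega) with hv0 | hv0 | hv0 | hv0 | hv0 | hv0 | hv0
  · exact absurd huv (by omega)
  · -- case (0,1)
    have e1 : (Finset.range m).filter (fun i => pa i u ∧ pb i v) = (∅ : Finset ℕ) :=
      filter_helper m _ _ (fun i => by simp only [pa, pb, Finset.mem_insert, Finset.mem_singleton, Finset.notMem_empty, iff_false]; omega)
    have e2 : (Finset.range m).filter (fun i => pa i v ∧ pb i u) = ({0} : Finset ℕ) :=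
      filter_helper m _ _ (fun i => by simp only [pa, pb, Finset.mem_insert, Finset.mem_singleton, Finset.notMem_empty, iff_false]; omega)
    rw [e1, e2, Finset.card_empty, Finset.card_singleton _]
    decide
  · -- case (0,2)
    have e1 : (Finset.range m).filter (fun i => pa i u ∧ pb i v) = (∅ : Finset ℕ) :=
      filter_helper m _ _ (fun i => by simp only [pa, pb, Finset.mem_insert, Finset.mem_singleton, Finset.notMem_empty, iff_false]; omega)
    have e2 : (Finset.range m).filter (fun i => pa i v ∧ pb i u) = ({1} : Finset ℕ) :=
      filter_helper m _ _ (fun i => by simp only [pa, pb, Finset.mem_insert, Finset.mem_singleton, Finset.notMem_empty, iff_false]; omega)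
    rw [e1, e2, Finset.card_empty, Finset.card_singleton _]
    decide
  · -- case (0,3)
    have e1 : (Finset.range m).filter (fun i => pa i u ∧ pb i v) = (∅ : Finset ℕ) :=
      filter_helper m _ _ (fun i => by simp only [pa, pb, Finset.mem_insert, Finset.mem_singleton, Finset.notMem_empty, iff_false]; omega)
    have e2 : (Finset.range m).filter (fun i => pa i v ∧ pb i u) = ({2} : Finset ℕ) :=
      filter_helper m _ _ (fun i => by simp only [pa, pb, Finset.mem_insert, Finset.mem_singleton, Finset.notMem_empty, iff_false]; omega)
    rw [e1, e2, Finset.card_empty, Finset.card_singleton _]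
    decide
  · -- case (0,4)
    have e1 : (Finset.range m).filter (fun i => pa i u ∧ pb i v) = (∅ : Finset ℕ) :=
      filter_helper m _ _ (fun i => by simp only [pa, pb, Finset.mem_insert, Finset.mem_singleton, Finset.notMem_empty, iff_false]; omega)
    have e2 : (Finset.range m).filter (fun i => pa i v ∧ pb i u) = ({0, 1, 2} : Finset ℕ) :=
      filter_helper m _ _ (fun i => by simp only [pa, pb, Finset.mem_insert, Finset.mem_singleton, Finset.notMem_empty, iff_false]; omega)
    rw [e1, e2, Finset.card_empty, (by decide : ({0, 1, 2} : Finset ℕ).card = 3)]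
    decide
  · -- case (0,O)
    have e1 : (Finset.range m).filter (fun i => pa i u ∧ pb i v) = (∅ : Finset ℕ) :=
      filter_helper m _ _ (fun i => by simp only [pa, pb, Finset.mem_insert, Finset.mem_singleton, Finset.notMem_empty, iff_false]; omega)
    have e2 : (Finset.range m).filter (fun i => pa i v ∧ pb i u) = ({0} : Finset ℕ) :=
      filter_helper m _ _ (fun i => by simp only [pa, pb, Finset.mem_insert, Finset.mem_singleton, Finset.notMem_empty, iff_false]; omega)
    rw [e1, e2, Finset.card_empty, Finset.card_singleton _]
    decide
  · -- case (0,E)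
    have e1 : (Finset.range m).filter (fun i => pa i u ∧ pb i v) = (∅ : Finset ℕ) :=
      filter_helper m _ _ (fun i => by simp only [pa, pb, Finset.mem_insert, Finset.mem_singleton, Finset.notMem_empty, iff_false]; omega)
    have e2 : (Finset.range m).filter (fun i => pa i v ∧ pb i u) = ({1} : Finset ℕ) :=
      filter_helper m _ _ (fun i => by simp only [pa, pb, Finset.mem_insert, Finset.mem_singleton, Finset.notMem_empty, iff_false]; omega)
    rw [e1, e2, Finset.card_empty, Finset.card_singleton _]
    decide
  · exact absurd huv (by omega)
  · exact absurd huv (by omega)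
  · -- case (1,2)
    have e1 : (Finset.range m).filter (fun i => pa i u ∧ pb i v) = (∅ : Finset ℕ) :=
      filter_helper m _ _ (fun i => by simp only [pa, pb, Finset.mem_insert, Finset.mem_singleton, Finset.notMem_empty, iff_false]; omega)
    have e2 : (Finset.range m).filter (fun i => pa i v ∧ pb i u) = ({1} : Finset ℕ) :=
      filter_helper m _ _ (fun i => by simp only [pa, pb, Finset.mem_insert, Finset.mem_singleton, Finset.notMem_empty, iff_false]; omega)
    rw [e1, e2, Finset.card_empty, Finset.card_singleton _]
    decide
  · -- case (1,3)
    have e1 : (Finset.range m).filter (fun i => pa i u ∧ pb i v) = ({0} : Finset ℕ) :=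
      filter_helper m _ _ (fun i => by simp only [pa, pb, Finset.mem_insert, Finset.mem_singleton, Finset.notMem_empty, iff_false]; omega)
    have e2 : (Finset.range m).filter (fun i => pa i v ∧ pb i u) = (∅ : Finset ℕ) :=
      filter_helper m _ _ (fun i => by simp only [pa, pb, Finset.mem_insert, Finset.mem_singleton, Finset.notMem_empty, iff_false]; omega)
    rw [e1, e2, Finset.card_singleton _, Finset.card_empty]
    decide
  · -- case (1,4)
    have e1 : (Finset.range m).filter (fun i => pa i u ∧ pb i v) = (∅ : Finset ℕ) :=
      filter_helper m _ _ (fun i => by simp only [pa, pb, Finset.mem_insert, Finset.mem_singleton, Finset.notMem_empty, iff_false]; omega)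
    have e2 : (Finset.range m).filter (fun i => pa i v ∧ pb i u) = ({1} : Finset ℕ) :=
      filter_helper m _ _ (fun i => by simp only [pa, pb, Finset.mem_insert, Finset.mem_singleton, Finset.notMem_empty, iff_false]; omega)
    rw [e1, e2, Finset.card_empty, Finset.card_singleton _]
    decide
  · -- case (1,O)
    have e1 : (Finset.range m).filter (fun i => pa i u ∧ pb i v) = ({((v + 1) / 2)} : Finset ℕ) :=
      filter_helper m _ _ (fun i => by simp only [pa, pb, Finset.mem_insert, Finset.mem_singleton, Finset.notMem_empty, iff_false]; omega)
    have e2 : (Finset.range m).filter (fun i => pa i v ∧ pb i u) = (∅ : Finset ℕ) :=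
      filter_helper m _ _ (fun i => by simp only [pa, pb, Finset.mem_insert, Finset.mem_singleton, Finset.notMem_empty, iff_false]; omega)
    rw [e1, e2, Finset.card_singleton _, Finset.card_empty]
    decide
  · -- case (1,E)
    have e1 : (Finset.range m).filter (fun i => pa i u ∧ pb i v) = ({0, (v / 2)} : Finset ℕ) :=
      filter_helper m _ _ (fun i => by simp only [pa, pb, Finset.mem_insert, Finset.mem_singleton, Finset.notMem_empty, iff_false]; omega)
    have e2 : (Finset.range m).filter (fun i => pa i v ∧ pb i u) = ({1} : Finset ℕ) :=
      filter_helper m _ _ (fun i => by simp only [pa, pb, Finset.mem_insert, Finset.mem_singleton, Finset.notMem_empty, iff_false]; omega)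
    rw [e1, e2, Finset.card_pair (show (0 : ℕ) ≠ (v / 2) by omega), Finset.card_singleton _]
    decide
  · exact absurd huv (by omega)
  · exact absurd huv (by omega)
  · exact absurd huv (by omega)
  · -- case (2,3)
    have e1 : (Finset.range m).filter (fun i => pa i u ∧ pb i v) = (∅ : Finset ℕ) :=
      filter_helper m _ _ (fun i => by simp only [pa, pb, Finset.mem_insert, Finset.mem_singleton, Finset.notMem_empty, iff_false]; omega)
    have e2 : (Finset.range m).filter (fun i => pa i v ∧ pb i u) = ({2} : Finset ℕ) :=
      filter_helper m _ _ (fun i => by simp only [pa, pb, Finset.mem_insert, Finset.mem_singleton, Finset.notMem_empty, iff_false]; omega)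
    rw [e1, e2, Finset.card_empty, Finset.card_singleton _]
    decide
  · -- case (2,4)
    have e1 : (Finset.range m).filter (fun i => pa i u ∧ pb i v) = (∅ : Finset ℕ) :=
      filter_helper m _ _ (fun i => by simp only [pa, pb, Finset.mem_insert, Finset.mem_singleton, Finset.notMem_empty, iff_false]; omega)
    have e2 : (Finset.range m).filter (fun i => pa i v ∧ pb i u) = ({2} : Finset ℕ) :=
      filter_helper m _ _ (fun i => by simp only [pa, pb, Finset.mem_insert, Finset.mem_singleton, Finset.notMem_empty, iff_false]; omega)
    rw [e1, e2, Finset.card_empty, Finset.card_singleton _]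
    decide
  · -- case (2,O)
    have e1 : (Finset.range m).filter (fun i => pa i u ∧ pb i v) = ({((v + 1) / 2)} : Finset ℕ) :=
      filter_helper m _ _ (fun i => by simp only [pa, pb, Finset.mem_insert, Finset.mem_singleton, Finset.notMem_empty, iff_false]; omega)
    have e2 : (Finset.range m).filter (fun i => pa i v ∧ pb i u) = (∅ : Finset ℕ) :=
      filter_helper m _ _ (fun i => by simp only [pa, pb, Finset.mem_insert, Finset.mem_singleton, Finset.notMem_empty, iff_false]; omega)
    rw [e1, e2, Finset.card_singleton _, Finset.card_empty]
    decide
  · -- case (2,E)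
    have e1 : (Finset.range m).filter (fun i => pa i u ∧ pb i v) = ({(v / 2)} : Finset ℕ) :=
      filter_helper m _ _ (fun i => by simp only [pa, pb, Finset.mem_insert, Finset.mem_singleton, Finset.notMem_empty, iff_false]; omega)
    have e2 : (Finset.range m).filter (fun i => pa i v ∧ pb i u) = (∅ : Finset ℕ) :=
      filter_helper m _ _ (fun i => by simp only [pa, pb, Finset.mem_insert, Finset.mem_singleton, Finset.notMem_empty, iff_false]; omega)
    rw [e1, e2, Finset.card_singleton _, Finset.card_empty]
    decide
  · exact absurd huv (by omega)
  · exact absurd huv (by omega)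
  · exact absurd huv (by omega)
  · exact absurd huv (by omega)
  · -- case (3,4)
    have e1 : (Finset.range m).filter (fun i => pa i u ∧ pb i v) = (∅ : Finset ℕ) :=
      filter_helper m _ _ (fun i => by simp only [pa, pb, Finset.mem_insert, Finset.mem_singleton, Finset.notMem_empty, iff_false]; omega)
    have e2 : (Finset.range m).filter (fun i => pa i v ∧ pb i u) = ({0} : Finset ℕ) :=
      filter_helper m _ _ (fun i => by simp only [pa, pb, Finset.mem_insert, Finset.mem_singleton, Finset.notMem_empty, iff_false]; omega)
    rw [e1, e2, Finset.card_empty, Finset.card_singleton _]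
    decide
  · -- case (3,O)
    have e1 : (Finset.range m).filter (fun i => pa i u ∧ pb i v) = (∅ : Finset ℕ) :=
      filter_helper m _ _ (fun i => by simp only [pa, pb, Finset.mem_insert, Finset.mem_singleton, Finset.notMem_empty, iff_false]; omega)
    have e2 : (Finset.range m).filter (fun i => pa i v ∧ pb i u) = ({0} : Finset ℕ) :=
      filter_helper m _ _ (fun i => by simp only [pa, pb, Finset.mem_insert, Finset.mem_singleton, Finset.notMem_empty, iff_false]; omega)
    rw [e1, e2, Finset.card_empty, Finset.card_singleton _]
    decide
  · -- case (3,E)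
    have e1 : (Finset.range m).filter (fun i => pa i u ∧ pb i v) = ({2} : Finset ℕ) :=
      filter_helper m _ _ (fun i => by simp only [pa, pb, Finset.mem_insert, Finset.mem_singleton, Finset.notMem_empty, iff_false]; omega)
    have e2 : (Finset.range m).filter (fun i => pa i v ∧ pb i u) = (∅ : Finset ℕ) :=
      filter_helper m _ _ (fun i => by simp only [pa, pb, Finset.mem_insert, Finset.mem_singleton, Finset.notMem_empty, iff_false]; omega)
    rw [e1, e2, Finset.card_singleton _, Finset.card_empty]
    decide
  · exact absurd huv (by omega)
  · exact absurd huv (by omega)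
  · exact absurd huv (by omega)
  · exact absurd huv (by omega)
  · exact absurd huv (by omega)
  · -- case (4,O)
    have e1 : (Finset.range m).filter (fun i => pa i u ∧ pb i v) = ({((v + 1) / 2)} : Finset ℕ) :=
      filter_helper m _ _ (fun i => by simp only [pa, pb, Finset.mem_insert, Finset.mem_singleton, Finset.notMem_empty, iff_false]; omega)
    have e2 : (Finset.range m).filter (fun i => pa i v ∧ pb i u) = (∅ : Finset ℕ) :=
      filter_helper m _ _ (fun i => by simp only [pa, pb, Finset.mem_insert, Finset.mem_singleton, Finset.notMem_empty, iff_false]; omega)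
    rw [e1, e2, Finset.card_singleton _, Finset.card_empty]
    decide
  · -- case (4,E)
    have e1 : (Finset.range m).filter (fun i => pa i u ∧ pb i v) = ({0, 2, (v / 2)} : Finset ℕ) :=
      filter_helper m _ _ (fun i => by simp only [pa, pb, Finset.mem_insert, Finset.mem_singleton, Finset.notMem_empty, iff_false]; omega)
    have e2 : (Finset.range m).filter (fun i => pa i v ∧ pb i u) = (∅ : Finset ℕ) :=
      filter_helper m _ _ (fun i => by simp only [pa, pb, Finset.mem_insert, Finset.mem_singleton, Finset.notMem_empty, iff_false]; omega)
    rw [e1, e2, (by rw [Finset.card_insert_of_notMem (by simp only [Finset.mem_insert, Finset.mem_singleton]; omega), Finset.card_pair (show (2 : ℕ) ≠ (v / 2) by omega)] : (({0, 2, (v / 2)} : Finset ℕ)).card = 3), Finset.card_empty]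
    decide
  · exact absurd huv (by omega)
  · exact absurd huv (by omega)
  · exact absurd huv (by omega)
  · exact absurd huv (by omega)
  · exact absurd huv (by omega)
  · -- case (O,O)
    have e1 : (Finset.range m).filter (fun i => pa i u ∧ pb i v) = ({((v + 1) / 2)} : Finset ℕ) :=
      filter_helper m _ _ (fun i => by simp only [pa, pb, Finset.mem_insert, Finset.mem_singleton, Finset.notMem_empty, iff_false]; omega)
    have e2 : (Finset.range m).filter (fun i => pa i v ∧ pb i u) = (∅ : Finset ℕ) :=
      filter_helper m _ _ (fun i => by simp only [pa, pb, Finset.mem_insert, Finset.mem_singleton, Finset.notMem_empty, iff_false]; omega)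
    rw [e1, e2, Finset.card_singleton _, Finset.card_empty]
    decide
  · -- u odd, v even
    by_cases hst : v = u + 1
    · have e1 : (Finset.range m).filter (fun i => pa i u ∧ pb i v) = ({0} : Finset ℕ) :=
        filter_helper m _ _ (fun i => by simp only [pa, pb, Finset.mem_insert, Finset.mem_singleton, Finset.notMem_empty, iff_false]; omega)
      have e2 : (Finset.range m).filter (fun i => pa i v ∧ pb i u) = (∅ : Finset ℕ) :=
        filter_helper m _ _ (fun i => by simp only [pa, pb, Finset.mem_insert, Finset.mem_singleton, Finset.notMem_empty, iff_false]; omega)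
      rw [e1, e2, Finset.card_singleton _, Finset.card_empty]
      decide
    · have e1 : (Finset.range m).filter (fun i => pa i u ∧ pb i v) = ({0, (v / 2)} : Finset ℕ) :=
        filter_helper m _ _ (fun i => by simp only [pa, pb, Finset.mem_insert, Finset.mem_singleton, Finset.notMem_empty, iff_false]; omega)
      have e2 : (Finset.range m).filter (fun i => pa i v ∧ pb i u) = ({((u + 1) / 2)} : Finset ℕ) :=
        filter_helper m _ _ (fun i => by simp only [pa, pb, Finset.mem_insert, Finset.mem_singleton, Finset.notMem_empty, iff_false]; omega)
      rw [e1, e2, Finset.card_pair (show (0 : ℕ) ≠ (v / 2) by omega), Finset.card_singleton _]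
      decide
  · exact absurd huv (by omega)
  · exact absurd huv (by omega)
  · exact absurd huv (by omega)
  · exact absurd huv (by omega)
  · exact absurd huv (by omega)
  · -- case (E,O)
    have e1 : (Finset.range m).filter (fun i => pa i u ∧ pb i v) = (∅ : Finset ℕ) :=
      filter_helper m _ _ (fun i => by simp only [pa, pb, Finset.mem_insert, Finset.mem_singleton, Finset.notMem_empty, iff_false]; omega)
    have e2 : (Finset.range m).filter (fun i => pa i v ∧ pb i u) = ({0} : Finset ℕ) :=
      filter_helper m _ _ (fun i => by simp only [pa, pb, Finset.mem_insert, Finset.mem_singleton, Finset.notMem_empty, iff_false]; omega)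
    rw [e1, e2, Finset.card_empty, Finset.card_singleton _]
    decide
  · -- case (E,E)
    have e1 : (Finset.range m).filter (fun i => pa i u ∧ pb i v) = (∅ : Finset ℕ) :=
      filter_helper m _ _ (fun i => by simp only [pa, pb, Finset.mem_insert, Finset.mem_singleton, Finset.notMem_empty, iff_false]; omega)
    have e2 : (Finset.range m).filter (fun i => pa i v ∧ pb i u) = ({(u / 2)} : Finset ℕ) :=
      filter_helper m _ _ (fun i => by simp only [pa, pb, Finset.mem_insert, Finset.mem_singleton, Finset.notMem_empty, iff_false]; omega)
    rw [e1, e2, Finset.card_empty, Finset.card_singleton _]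
    decide

lemma upper_cover (m : ℕ) (hm : 2 ≤ m) :
    ∃ H : Fin m → Fin 2 → Finset (Fin (2 * m - 1)), IsOddCoverOn Finset.univ H := by
  classical
  refine ⟨fun i => ![Finset.univ.filter (fun v : Fin (2 * m - 1) => pa i.1 v.1),
    Finset.univ.filter (fun v : Fin (2 * m - 1) => pb i.1 v.1)], ?_, ?_, ?_⟩
  · intro i j
    exact Finset.subset_univ _
  · intro i x y hxy
    have hd : Disjoint (Finset.univ.filter (fun v : Fin (2 * m - 1) => pa i.1 v.1))
        (Finset.univ.filter (fun v : Fin (2 * m - 1) => pb i.1 v.1)) := by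
      rw [Finset.disjoint_left]
      intro z hz1 hz2
      rw [Finset.mem_filter] at hz1 hz2
      exact pa_pb_not i.1 z.1 ⟨hz1.2, hz2.2⟩
    fin_cases x <;> fin_cases y <;>
      first
      | exact absurd rfl hxy
      | exact hd
      | exact hd.symm
      | (simp only [Function.onFun, Matrix.cons_val_zero, Matrix.cons_val_one,
          Matrix.head_cons]; exact hd)
      | (simp only [Function.onFun, Matrix.cons_val_zero, Matrix.cons_val_one,
          Matrix.head_cons]; exact hd.symm)
  · intro e he hcard
    obtain ⟨u, v, huv, rfl⟩ := Finset.card_eq_two.mp hcard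
    have hiff : ∀ i : Fin m,
        IsEdge (![Finset.univ.filter (fun w : Fin (2 * m - 1) => pa i.1 w.1),
          Finset.univ.filter (fun w : Fin (2 * m - 1) => pb i.1 w.1)]) {u, v}
          ↔ ((pa i.1 u.1 ∧ pb i.1 v.1) ∨ (pa i.1 v.1 ∧ pb i.1 u.1)) := by
      intro i
      rw [isEdge_pair_iff huv]
      · simp only [Matrix.cons_val_zero, Matrix.cons_val_one, Matrix.head_cons,
          Finset.mem_filter, Finset.mem_univ, true_and]
      · simp only [Matrix.cons_val_zero, Matrix.cons_val_one, Matrix.head_cons]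
        rw [Finset.disjoint_left]
        intro z hz1 hz2
        rw [Finset.mem_filter] at hz1 hz2
        exact pa_pb_not i.1 z.1 ⟨hz1.2, hz2.2⟩
    have hsplit : (Finset.univ.filter fun i : Fin m =>
          IsEdge (![Finset.univ.filter (fun w : Fin (2 * m - 1) => pa i.1 w.1),
            Finset.univ.filter (fun w : Fin (2 * m - 1) => pb i.1 w.1)]) {u, v})
        = (Finset.univ.filter fun i : Fin m => pa i.1 u.1 ∧ pb i.1 v.1)
          ∪ (Finset.univ.filter fun i : Fin m => pa i.1 v.1 ∧ pb i.1 u.1) := by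
      rw [← Finset.filter_or]
      exact Finset.filter_congr (fun i _ => by rw [hiff i])
    have hdisjXY : Disjoint (Finset.univ.filter fun i : Fin m => pa i.1 u.1 ∧ pb i.1 v.1)
        (Finset.univ.filter fun i : Fin m => pa i.1 v.1 ∧ pb i.1 u.1) := by
      rw [Finset.disjoint_left]
      intro i hi1 hi2
      rw [Finset.mem_filter] at hi1 hi2
      exact pa_pb_not i.1 u.1 ⟨hi1.2.1, hi2.2.2⟩
    rw [hsplit, Finset.card_union_of_disjoint hdisjXY]
    have conv : ∀ (x y : Fin (2 * m - 1)),
        (Finset.univ.filter fun i : Fin m => pa i.1 x.1 ∧ pb i.1 y.1).card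
          = ((Finset.range m).filter fun i => pa i x.1 ∧ pb i y.1).card := by
      intro x y
      rw [Finset.card_filter, Finset.card_filter]
      exact Fin.sum_univ_eq_sum_range (fun i => if pa i x.1 ∧ pb i y.1 then 1 else 0) m
    rw [conv u v, conv v u]
    have hval : u.1 ≠ v.1 := fun h => huv (Fin.ext h)
    rcases Nat.lt_or_ge u.1 v.1 with h | h
    · exact core m u.1 v.1 hm u.isLt v.isLt h
    · have h' : v.1 < u.1 := by omega
      rw [Nat.add_comm]
      exact core m v.1 u.1 hm v.isLt u.isLt h'

end Upper

/-- For every odd `n ≥ 3`, the odd cover number of `K_n` is exactly `(n+1)/2`. -/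
theorem stmt3 (n : ℕ) (hn : 3 ≤ n) (ho : Odd n) :
    oddCoverNumber 2 n = (n + 1) / 2 := by
  obtain ⟨k, hk⟩ := ho
  subst hk
  have h1 : (2 * k + 1 + 1) / 2 = k + 1 := by omega
  rw [h1]
  have hmem : (k + 1) ∈ {m | ∃ H : Fin m → Fin 2 → Finset (Fin (2 * k + 1)),
      IsOddCoverOn Finset.univ H} := by
    have h := upper_cover (k + 1) (by omega)
    have h2 : 2 * (k + 1) - 1 = 2 * k + 1 := by omega
    rw [h2] at h
    exact h
  unfold oddCoverNumber
  apply le_antisymm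
  · exact Nat.sInf_le hmem
  · apply le_csInf ⟨_, hmem⟩
    rintro b ⟨H, hH⟩
    have h := lower_bound (by omega) ⟨k, rfl⟩ H hH
    rwa [h1] at h
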